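/- Let N be a friend of 10 and let a be a positive integer with 5^(2a) || N (i.e. 5^(2a) divides N but 5^(2a+1) does not). Then there exist a prime p dividing N and an odd integer f with 1 < f ≤ min{2a+1, p−1} such that f divides 2a+1, 5^f ≡ 1 (mod p), and f is the smallest odd integer greater than 1 satisfying 5^f ≡ 1 (mod p). -/
import Mathlib

private lemma geom_aux : ∀ n : ℕ, 4 * (∑ i ∈ Finset.range n, 5 ^ i) + 1 = 5 ^ n := by
  intro n
  induction n with
  | zero => simp
  | succ n ih =>
    rw [Finset.sum_range_succ, pow_succ]
    ring_nf
    ring_nf at ih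
    omega

theorem friend_of_ten_exists_prime_and_f (N a : ℕ) (hN : 10 < N)
    (hfriend : 5 * (ArithmeticFunction.sigma 1) N = 9 * N) (ha : 0 < a)
    (hdvd : 5 ^ (2 * a) ∣ N) (hndvd : ¬ 5 ^ (2 * a + 1) ∣ N) :
    ∃ p f : ℕ, p.Prime ∧ p ∣ N ∧ Odd f ∧ 1 < f ∧ f ≤ min (2 * a + 1) (p - 1) ∧
      f ∣ 2 * a + 1 ∧ 5 ^ f ≡ 1 [MOD p] ∧
      (∀ g : ℕ, Odd g → 1 < g → 5 ^ g ≡ 1 [MOD p] → f ≤ g) := by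
  have h5 : Nat.Prime 5 := by norm_num
  set S := (ArithmeticFunction.sigma 1) (5 ^ (2 * a)) with hS
  have hSsum : S = ∑ i ∈ Finset.range (2 * a + 1), 5 ^ i := by
    rw [hS, ArithmeticFunction.sigma_one_apply_prime_pow h5]
  have hgeom : 4 * S + 1 = 5 ^ (2 * a + 1) := by rw [hSsum]; exact geom_aux _
  -- S > 1
  have hpow : (125 : ℕ) ≤ 5 ^ (2 * a + 1) := by
    calc (125:ℕ) = 5 ^ 3 := by norm_num
    _ ≤ 5 ^ (2 * a + 1) := Nat.pow_le_pow_right (by norm_num) (by omega)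
  have hS1 : 1 < S := by omega
  -- prime factor of S
  obtain ⟨p, hp, hpS⟩ := Nat.exists_prime_and_dvd (n := S) (by omega)
  -- S is odd
  have hSodd : ¬ 2 ∣ S := by
    intro h2
    have : ((S : ZMod 2)) = 0 := (ZMod.natCast_eq_zero_iff _ _).mpr h2
    rw [hSsum] at this
    push_cast at this
    simp only [show ((5 : ZMod 2)) = 1 by decide, one_pow, Finset.sum_const,
      Finset.card_range, smul_eq_mul, mul_one] at this
    have h21 : ((2 * a + 1 : ℕ) : ZMod 2) = 1 := by
      push_cast
      simp [show ((2:ZMod 2)) = 0 by decide]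
    rw [nsmul_one, h21] at this
    exact one_ne_zero this
  -- 3 does not divide S
  have hS3 : ¬ 3 ∣ S := by
    intro h3
    have h0 : ((S : ZMod 3)) = 0 := (ZMod.natCast_eq_zero_iff _ _).mpr h3
    have := congrArg (fun n : ℕ => (n : ZMod 3)) hgeom
    push_cast at this
    rw [h0] at this
    simp only [mul_zero, zero_add] at this
    have h5m : ((5 : ZMod 3)) = -1 := by decide
    rw [h5m, Odd.neg_one_pow ⟨a, by ring⟩] at this
    exact (by decide : ¬ ((1 : ZMod 3)) = -1) this
  have hp2 : p ≠ 2 := fun h => hSodd (h ▸ hpS)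
  have hp3 : p ≠ 3 := fun h => hS3 (h ▸ hpS)
  -- p ∣ N
  set m := N / 5 ^ (2 * a) with hm
  have hNm : N = 5 ^ (2 * a) * m := (Nat.mul_div_cancel' hdvd).symm
  have h5m : ¬ 5 ∣ m := by
    intro h
    exact hndvd (by rw [hNm, pow_succ]; exact mul_dvd_mul_left _ h)
  have hcop : Nat.Coprime (5 ^ (2 * a)) m :=
    Nat.Coprime.pow_left _ ((Nat.Prime.coprime_iff_not_dvd h5).mpr h5m)
  have hsigmaN : (ArithmeticFunction.sigma 1) N = S * (ArithmeticFunction.sigma 1) m := by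
    rw [hNm]; exact ArithmeticFunction.isMultiplicative_sigma.map_mul_of_coprime hcop
  have hpsigma : p ∣ (ArithmeticFunction.sigma 1) N := hsigmaN ▸ hpS.mul_right _
  have hp9N : p ∣ 9 * N := by rw [← hfriend]; exact Dvd.dvd.mul_left hpsigma 5
  have hpN : p ∣ N := by
    rcases (Nat.Prime.dvd_mul hp).mp hp9N with h9 | h
    · exfalso
      have h3 : p ∣ 3 := hp.dvd_of_dvd_pow (n := 2) ((by norm_num : (9:ℕ) = 3^2) ▸ h9)
      exact hp3 ((Nat.prime_dvd_prime_iff_eq hp (by norm_num)).mp h3)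
    · exact h
  -- 5 ^ (2a+1) ≡ 1 mod p
  have hpinst : Fact p.Prime := ⟨hp⟩
  have hcast : ((5 : ZMod p)) ^ (2 * a + 1) = 1 := by
    have := congrArg (fun n : ℕ => (n : ZMod p)) hgeom
    push_cast at this
    rw [(ZMod.natCast_eq_zero_iff _ _).mpr hpS] at this
    simpa using this.symm
  have h5ne : ((5 : ZMod p)) ≠ 0 := by
    intro h
    have : p ∣ 5 := by
      have := (ZMod.natCast_eq_zero_iff 5 p).mp (by exact_mod_cast h)
      exact this
    have hp5 : p = 5 := (Nat.prime_dvd_prime_iff_eq hp h5).mp this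
    subst hp5
    have : (5:ℕ) ∣ 4 * S + 1 := hgeom ▸ dvd_pow_self 5 (by omega)
    omega
  set f := orderOf ((5 : ZMod p)) with hf
  have hfdvd : f ∣ 2 * a + 1 := orderOf_dvd_of_pow_eq_one hcast
  have hfpos : 0 < f := Nat.pos_of_dvd_of_pos hfdvd (by omega)
  have hfodd : Odd f := by
    rcases Nat.even_or_odd f with he | ho
    · exfalso
      obtain ⟨k, hk⟩ := he
      have : 2 ∣ 2 * a + 1 := Dvd.dvd.trans ⟨k, by omega⟩ hfdvd
      omega
    · exact ho
  have hf1 : f ≠ 1 := by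
    intro h1
    have : ((5 : ZMod p)) = 1 := orderOf_eq_one_iff.mp h1
    have h4 : ((4 : ZMod p)) = 0 := by
      have : ((5 : ZMod p)) - 1 = 0 := by rw [this]; ring
      calc ((4 : ZMod p)) = ((5 : ZMod p)) - 1 := by ring
      _ = 0 := this
    have : p ∣ 4 := by
      have := (ZMod.natCast_eq_zero_iff 4 p).mp (by exact_mod_cast h4)
      exact this
    have : p ∣ 2 := hp.dvd_of_dvd_pow (n := 2) ((by norm_num : (4:ℕ) = 2^2) ▸ this)
    exact hp2 ((Nat.prime_dvd_prime_iff_eq hp Nat.prime_two).mp this)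
  have hfp : f ∣ p - 1 := ZMod.orderOf_dvd_card_sub_one h5ne
  refine ⟨p, f, hp, hpN, hfodd, by omega, ?_, hfdvd, ?_, ?_⟩
  · refine le_min (Nat.le_of_dvd (by omega) hfdvd) (Nat.le_of_dvd ?_ hfp)
    have := hp.two_le; omega
  · have : ((5 : ZMod p)) ^ f = 1 := pow_orderOf_eq_one _
    have h : (((5 ^ f : ℕ)) : ZMod p) = ((1 : ℕ) : ZMod p) := by push_cast; exact this
    exact (ZMod.natCast_eq_natCast_iff _ _ _).mp h
  · intro g hgo hg1 hgmod
    have : (((5 ^ g : ℕ)) : ZMod p) = ((1 : ℕ) : ZMod p) :=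
      (ZMod.natCast_eq_natCast_iff _ _ _).mpr hgmod
    push_cast at this
    exact Nat.le_of_dvd (by omega) (orderOf_dvd_of_pow_eq_one this)
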